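/- Let C, D ≥ 0 and θᵢ ≠ θⱼ be reals. Then √((C + |θᵢ| + |θⱼ|)² + D + θᵢ² + θⱼ²) > √((C + |θᵢ + θⱼ|)² + D + |θᵢ + θⱼ|²/2). Consequently, replacing (θᵢ, θⱼ) by ((θᵢ+θⱼ)/2, (θᵢ+θⱼ)/2) strictly decreases the EYE penalty when both coordinates are known (r-indices equal 1). -/
import Mathlib


theorem eye_averaging_strict (C D θi θj : ℝ) (hC : 0 ≤ C) (hD : 0 ≤ D)
    (hne : θi ≠ θj) :
    Real.sqrt ((C + |θi + θj|) ^ 2 + D + |θi + θj| ^ 2 / 2) <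
      Real.sqrt ((C + |θi| + |θj|) ^ 2 + D + θi ^ 2 + θj ^ 2) := by
  apply Real.sqrt_lt_sqrt
  · positivity
  · have h1 : |θi + θj| ≤ |θi| + |θj| := abs_add_le _ _
    have h2 : |θi + θj| ^ 2 = (θi + θj) ^ 2 := sq_abs _
    have hne2 : θi - θj ≠ 0 := sub_ne_zero.mpr hne
    have h3 : (θi - θj) ^ 2 > 0 := by positivity
    nlinarith [abs_nonneg (θi + θj), abs_nonneg θi, abs_nonneg θj]
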